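/- Let $T$ be a rooted tree with $n$ leaves in which every vertex has at most $h \ge 2$ children. Then $T$ contains a subtree (obtained by choosing at most two children at each vertex) in which every vertex has at most 2 children and which has at least $n^{1/\log_2 h}$ leaves. -/

import Mathlib

lemma clogb_facts (h : ℕ) (hh : 2 ≤ h) :
    0 < 1 / Real.logb 2 h ∧ 1 / Real.logb 2 h ≤ 1 ∧
      (h : ℝ) ^ (1 / Real.logb 2 h) = 2 := by
  have hhr : (2:ℝ) ≤ (h:ℝ) := by exact_mod_cast hh
  have hlogb1 : (1:ℝ) ≤ Real.logb 2 h := by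
    rw [show (1:ℝ) = Real.logb 2 2 from (Real.logb_self_eq_one (by norm_num)).symm]
    exact (Real.logb_le_logb (by norm_num) (by norm_num) (by linarith)).2 hhr
  have hlogbpos : 0 < Real.logb 2 h := lt_of_lt_of_le one_pos hlogb1
  refine ⟨by positivity, by rw [div_le_one hlogbpos]; exact hlogb1, ?_⟩
  have heq : 1 / Real.logb 2 h = Real.logb h 2 := by
    simp only [Real.logb, one_div, inv_div]
  rw [heq]
  exact Real.rpow_logb (by positivity) (by exact_mod_cast (by omega : h ≠ 1)) (by norm_num)

lemma key_ineq (h : ℕ) (hh : 2 ≤ h) (a b N : ℝ) (hb : 0 ≤ b) (hba : b ≤ a)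
    (hN : 0 ≤ N) (hsum : N ≤ a + ((h:ℝ) - 1) * b) :
    N ^ (1 / Real.logb 2 h) ≤ a ^ (1 / Real.logb 2 h) + b ^ (1 / Real.logb 2 h) := by
  obtain ⟨hc0, hc1, hpow⟩ := clogb_facts h hh
  set c := 1 / Real.logb 2 (h:ℝ) with hc
  have ha : 0 ≤ a := le_trans hb hba
  have hhr : (2:ℝ) ≤ (h:ℝ) := by exact_mod_cast hh
  have hhpos : (0:ℝ) < h := by linarith
  rcases le_or_gt N ((h:ℝ) * b) with hcase | hcase
  · -- N ≤ h * b
    calc N ^ c ≤ ((h:ℝ) * b) ^ c := Real.rpow_le_rpow hN hcase hc0.le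
    _ = (h:ℝ) ^ c * b ^ c := Real.mul_rpow hhpos.le hb
    _ = 2 * b ^ c := by rw [hpow]
    _ = b ^ c + b ^ c := by ring
    _ ≤ a ^ c + b ^ c := by
        have := Real.rpow_le_rpow hb hba hc0.le
        linarith
  · -- h * b < N
    have hNpos : 0 < N := lt_of_le_of_lt (by positivity) hcase
    rcases eq_or_lt_of_le hc1 with hc1' | hc1'
    ·
      have hh2 : (h:ℝ) = 2 := by
        have := hpow
        rw [hc1', Real.rpow_one] at this
        exact this
      rw [hc1', Real.rpow_one, Real.rpow_one, Real.rpow_one]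
      rw [hh2] at hsum
      linarith
    · -- c < 1
      have K := (Real.strictConcaveOn_rpow hc0 hc1').concaveOn
      set q : ℝ := (h:ℝ) * b / N with hq
      set p : ℝ := 1 - q with hp
      have hq0 : 0 ≤ q := by positivity
      have hq1 : q < 1 := by rw [hq, div_lt_one hNpos]; exact hcase
      have hp0 : 0 ≤ p := by rw [hp]; linarith
      have hpq : p + q = 1 := by ring
      have hqNh : q * (N / (h:ℝ)) = b := by
        rw [hq]; field_simp [hNpos.ne', hhpos.ne']
      -- first concavity application
      have h1 := K.2 (Set.mem_Ici.2 hN) (Set.mem_Ici.2 (by positivity : (0:ℝ) ≤ N / h))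
        hp0 hq0 hpq
      have h2 := K.2 (Set.mem_Ici.2 (le_refl (0:ℝ))) (Set.mem_Ici.2 (by positivity : (0:ℝ) ≤ N / h))
        hp0 hq0 hpq
      simp only [smul_eq_mul, mul_zero, zero_add] at h1 h2
      rw [hqNh] at h2
      rw [Real.zero_rpow (ne_of_gt hc0), mul_zero, zero_add] at h2
      have hcomb : p * N + q * (N / h) = N - ((h:ℝ)-1) * b := by
        have : q * N = (h:ℝ) * b := by rw [hq]; field_simp [hNpos.ne']
        have h3 : q * (N/h) = b := hqNh
        nlinarith [this, h3]
      rw [hcomb] at h1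
      have hNh : (N / (h:ℝ)) ^ c + (N / (h:ℝ)) ^ c = N ^ c := by
        have : ((h:ℝ) * (N / h)) ^ c = (h:ℝ)^c * (N/h)^c := Real.mul_rpow hhpos.le (by positivity)
        rw [hpow] at this
        have h4 : (h:ℝ) * (N / h) = N := by field_simp
        rw [h4] at this
        linarith
      have hmono : (N - ((h:ℝ)-1) * b) ^ c ≤ a ^ c := by
        apply Real.rpow_le_rpow _ (by linarith) hc0.le
        nlinarith
      have hNb : 0 ≤ N - ((h:ℝ)-1)*b := by nlinarith
      -- combine
      have : N ^ c = p * N ^ c + q * ((N/h)^c + (N/h)^c) := by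
        rw [hNh]; ring
      rw [this]
      have : p * N ^ c + q * ((N/(h:ℝ))^c + (N/(h:ℝ))^c)
          = (p * N ^ c + q * (N/(h:ℝ))^c) + q * (N/(h:ℝ))^c := by ring
      rw [this]
      linarith [h1, h2, hmono]

open Classical in
noncomputable def lvsF (T : Finset (List ℕ)) : Finset (List ℕ) :=
  T.filter (fun v => ∀ i : ℕ, v ++ [i] ∉ T)

def childF (T : Finset (List ℕ)) (i : ℕ) : Finset (List ℕ) :=
  (T.filter (fun v => v.head? = some i)).image List.tail

def idxF (T : Finset (List ℕ)) : Finset ℕ :=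
  (T.filter (fun v => v.length = 1)).image (fun v => v.headI)

lemma mem_lvsF {T : Finset (List ℕ)} {v : List ℕ} :
    v ∈ lvsF T ↔ v ∈ T ∧ ∀ i : ℕ, v ++ [i] ∉ T := by
  classical
  simp [lvsF]

lemma mem_childF {T : Finset (List ℕ)} {i : ℕ} {w : List ℕ} :
    w ∈ childF T i ↔ (i :: w) ∈ T := by
  constructor
  · intro hmem
    rw [childF, Finset.mem_image] at hmem
    obtain ⟨v, hv, rfl⟩ := hmem
    rw [Finset.mem_filter] at hv
    obtain ⟨hvT, hvh⟩ := hv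
    cases v with
    | nil => simp at hvh
    | cons a l =>
      simp only [List.head?_cons, Option.some.injEq] at hvh
      subst hvh
      simpa using hvT
  · intro hmem
    rw [childF, Finset.mem_image]
    exact ⟨i :: w, Finset.mem_filter.2 ⟨hmem, rfl⟩, rfl⟩

lemma mem_idxF {T : Finset (List ℕ)} {i : ℕ} :
    i ∈ idxF T ↔ [i] ∈ T := by
  constructor
  · intro hmem
    rw [idxF, Finset.mem_image] at hmem
    obtain ⟨v, hv, rfl⟩ := hmem
    rw [Finset.mem_filter] at hv
    obtain ⟨hvT, hvl⟩ := hv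
    cases v with
    | nil => simp at hvl
    | cons a l =>
      have : l = [] := by
        cases l with
        | nil => rfl
        | cons b m => simp at hvl
      subst this
      simpa using hvT
  · intro hmem
    rw [idxF, Finset.mem_image]
    exact ⟨[i], Finset.mem_filter.2 ⟨hmem, rfl⟩, rfl⟩

lemma branch_root (i : ℕ) (L : Set (List ℕ)) :
    {k : ℕ | ∃ l ∈ (fun u => i :: u) '' L, ([] : List ℕ) ++ [k] <+: l} ⊆ {i} := by
  rintro k ⟨l, ⟨u, _, rfl⟩, hpre⟩
  simp only [List.nil_append] at hpre
  rw [List.cons_prefix_cons] at hpre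
  exact hpre.1 ▸ rfl

lemma branch_cons_eq (i : ℕ) (w : List ℕ) (L : Set (List ℕ)) :
    {k : ℕ | ∃ l ∈ (fun u => i :: u) '' L, ((i :: w) ++ [k]) <+: l} =
    {k : ℕ | ∃ l ∈ L, (w ++ [k]) <+: l} := by
  ext k
  simp only [Set.mem_setOf_eq]
  constructor
  · rintro ⟨l, ⟨u, hu, rfl⟩, hpre⟩
    rw [List.cons_append, List.cons_prefix_cons] at hpre
    exact ⟨u, hu, hpre.2⟩
  · rintro ⟨u, hu, hpre⟩
    exact ⟨i :: u, ⟨u, hu, rfl⟩, by rw [List.cons_append, List.cons_prefix_cons]; exact ⟨rfl, hpre⟩⟩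

lemma branch_cons_ne {i j : ℕ} (hne : j ≠ i) (w : List ℕ) (L : Set (List ℕ)) :
    {k : ℕ | ∃ l ∈ (fun u => i :: u) '' L, ((j :: w) ++ [k]) <+: l} = ∅ := by
  ext k
  simp only [Set.mem_setOf_eq, Set.mem_empty_iff_false, iff_false]
  rintro ⟨l, ⟨u, _, rfl⟩, hpre⟩
  rw [List.cons_append, List.cons_prefix_cons] at hpre
  exact hne hpre.1

lemma branch_single (i : ℕ) (L : Set (List ℕ))
    (hL : ∀ w : List ℕ, Set.ncard {k : ℕ | ∃ l ∈ L, (w ++ [k]) <+: l} ≤ 2) :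
    ∀ v : List ℕ, Set.ncard {k : ℕ | ∃ l ∈ (fun u => i :: u) '' L, (v ++ [k]) <+: l} ≤ 2 := by
  intro v
  cases v with
  | nil =>
    refine le_trans (Set.ncard_le_ncard (branch_root i L) (Set.finite_singleton i)) ?_
    simp
  | cons j w =>
    by_cases hji : j = i
    · subst hji
      rw [branch_cons_eq]
      exact hL w
    · rw [branch_cons_ne hji]
      simp

lemma setof_union (P : ℕ → List ℕ → Prop) (A B : Set (List ℕ)) :
    {k : ℕ | ∃ l ∈ A ∪ B, P k l} = {k | ∃ l ∈ A, P k l} ∪ {k | ∃ l ∈ B, P k l} := by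
  ext k
  simp only [Set.mem_setOf_eq, Set.mem_union]
  constructor
  · rintro ⟨l, hl | hl, hp⟩
    · exact Or.inl ⟨l, hl, hp⟩
    · exact Or.inr ⟨l, hl, hp⟩
  · rintro (⟨l, hl, hp⟩ | ⟨l, hl, hp⟩)
    · exact ⟨l, Or.inl hl, hp⟩
    · exact ⟨l, Or.inr hl, hp⟩

lemma branch_union {i₁ i₂ : ℕ} (hne : i₁ ≠ i₂) (L₁ L₂ : Set (List ℕ))
    (h₁ : ∀ w : List ℕ, Set.ncard {k : ℕ | ∃ l ∈ L₁, (w ++ [k]) <+: l} ≤ 2)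
    (h₂ : ∀ w : List ℕ, Set.ncard {k : ℕ | ∃ l ∈ L₂, (w ++ [k]) <+: l} ≤ 2) :
    ∀ v : List ℕ, Set.ncard {k : ℕ | ∃ l ∈ ((fun u => i₁ :: u) '' L₁ ∪ (fun u => i₂ :: u) '' L₂),
      (v ++ [k]) <+: l} ≤ 2 := by
  intro v
  rw [setof_union]
  cases v with
  | nil =>
    have hsub : {k : ℕ | ∃ l ∈ (fun u => i₁ :: u) '' L₁, ([] : List ℕ) ++ [k] <+: l} ∪
        {k : ℕ | ∃ l ∈ (fun u => i₂ :: u) '' L₂, ([] : List ℕ) ++ [k] <+: l} ⊆ ({i₁, i₂} : Set ℕ) := by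
      apply Set.union_subset
      · exact (branch_root i₁ L₁).trans (by simp)
      · exact (branch_root i₂ L₂).trans (by simp)
    refine le_trans (Set.ncard_le_ncard hsub (Set.toFinite _)) ?_
    refine le_trans (Set.ncard_insert_le _ _) ?_
    simp
  | cons j w =>
    by_cases hj1 : j = i₁
    · subst hj1
      rw [branch_cons_eq, branch_cons_ne hne, Set.union_empty]
      exact h₁ w
    · rw [branch_cons_ne hj1]
      by_cases hj2 : j = i₂
      · subst hj2
        rw [branch_cons_eq, Set.empty_union]
        exact h₂ w
      · rw [branch_cons_ne hj2]
        simp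

lemma leaf_cons {T : Finset (List ℕ)} {i : ℕ} {w : List ℕ} :
    (i :: w) ∈ lvsF T ↔ w ∈ lvsF (childF T i) := by
  rw [mem_lvsF, mem_lvsF, mem_childF]
  constructor
  · rintro ⟨h1, h2⟩
    refine ⟨h1, fun k hk => h2 k ?_⟩
    rw [mem_childF] at hk
    simpa using hk
  · rintro ⟨h1, h2⟩
    refine ⟨h1, fun k hk => h2 k ?_⟩
    rw [mem_childF]
    simpa using hk

lemma childF_root {T : Finset (List ℕ)} {i : ℕ} (h : i ∈ idxF T) : [] ∈ childF T i := by
  rw [mem_childF]; exact mem_idxF.1 h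

lemma childF_pref {T : Finset (List ℕ)}
    (hpref : ∀ v ∈ T, ∀ u : List ℕ, u <+: v → u ∈ T) (i : ℕ) :
    ∀ v ∈ childF T i, ∀ u : List ℕ, u <+: v → u ∈ childF T i := by
  intro v hv u hu
  rw [mem_childF] at hv ⊢
  exact hpref _ hv _ (List.cons_prefix_cons.2 ⟨rfl, hu⟩)

lemma childF_deg {T : Finset (List ℕ)} {h : ℕ}
    (hdeg : ∀ v ∈ T, Set.ncard {i : ℕ | v ++ [i] ∈ T} ≤ h) (i : ℕ) (hi : i ∈ idxF T) :
    ∀ v ∈ childF T i, Set.ncard {j : ℕ | v ++ [j] ∈ childF T i} ≤ h := by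
  intro v hv
  rw [mem_childF] at hv
  have hset : {j : ℕ | v ++ [j] ∈ childF T i} = {j : ℕ | (i :: v) ++ [j] ∈ T} := by
    ext j
    simp only [Set.mem_setOf_eq, mem_childF, List.cons_append]
  rw [hset]
  exact hdeg _ hv

lemma childF_card_lt {T : Finset (List ℕ)} (hroot : [] ∈ T) (i : ℕ) :
    (childF T i).card < T.card := by
  have h1 : (childF T i).card ≤ (T.filter (fun v => v.head? = some i)).card :=
    Finset.card_image_le
  have h2 : T.filter (fun v => v.head? = some i) ⊆ T.erase [] := by
    intro v hv
    rw [Finset.mem_filter] at hv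
    rw [Finset.mem_erase]
    refine ⟨?_, hv.1⟩
    rintro rfl
    simp at hv
  have h3 := Finset.card_le_card h2
  have h4 : (T.erase []).card < T.card := Finset.card_erase_lt_of_mem hroot
  omega

lemma lvsF_decomp {T : Finset (List ℕ)}
    (hpref : ∀ v ∈ T, ∀ u : List ℕ, u <+: v → u ∈ T) (hI : (idxF T).Nonempty) :
    lvsF T = (idxF T).biUnion (fun i => (lvsF (childF T i)).image (fun w => i :: w)) := by
  ext v
  rw [mem_lvsF, Finset.mem_biUnion]
  constructor
  · rintro ⟨hvT, hvl⟩
    cases v with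
    | nil =>
      obtain ⟨i, hi⟩ := hI
      exact absurd (mem_idxF.1 hi) (by simpa using hvl i)
    | cons j w =>
      refine ⟨j, ?_, ?_⟩
      · exact mem_idxF.2 (hpref _ hvT [j] ⟨w, rfl⟩)
      · rw [Finset.mem_image]
        exact ⟨w, leaf_cons.1 (mem_lvsF.2 ⟨hvT, hvl⟩), rfl⟩
  · rintro ⟨i, hi, hmem⟩
    rw [Finset.mem_image] at hmem
    obtain ⟨w, hw, rfl⟩ := hmem
    exact mem_lvsF.1 (leaf_cons.2 hw)

lemma lvsF_card_sum {T : Finset (List ℕ)}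
    (hpref : ∀ v ∈ T, ∀ u : List ℕ, u <+: v → u ∈ T) (hI : (idxF T).Nonempty) :
    (lvsF T).card = ∑ i ∈ idxF T, (lvsF (childF T i)).card := by
  rw [lvsF_decomp hpref hI, Finset.card_biUnion]
  · refine Finset.sum_congr rfl fun i _ => ?_
    exact Finset.card_image_of_injective _ List.cons_injective
  · intro x _ y _ hxy
    dsimp only [Function.onFun]
    rw [Finset.disjoint_left]
    intro a ha hb
    rw [Finset.mem_image] at ha hb
    obtain ⟨w, _, rfl⟩ := ha
    obtain ⟨u, _, hu⟩ := hb
    injection hu with h1 h2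
    exact hxy h1.symm

lemma idxF_card_le {T : Finset (List ℕ)} {h : ℕ} (hroot : [] ∈ T)
    (hdeg : ∀ v ∈ T, Set.ncard {i : ℕ | v ++ [i] ∈ T} ≤ h) :
    (idxF T).card ≤ h := by
  have hset : {i : ℕ | ([] : List ℕ) ++ [i] ∈ T} = ↑(idxF T) := by
    ext i
    simp [mem_idxF]
  have := hdeg [] hroot
  rw [hset, Set.ncard_coe_finset] at this
  exact this

lemma main_ind (h : ℕ) (hh : 2 ≤ h) :
    ∀ m : ℕ, ∀ T : Finset (List ℕ), T.card ≤ m → [] ∈ T →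
    (∀ v ∈ T, ∀ u : List ℕ, u <+: v → u ∈ T) →
    (∀ v ∈ T, Set.ncard {i : ℕ | v ++ [i] ∈ T} ≤ h) →
    ∃ L : Set (List ℕ),
      L ⊆ {v : List ℕ | v ∈ T ∧ ∀ i : ℕ, v ++ [i] ∉ T} ∧
      ((lvsF T).card : ℝ) ^ (1 / Real.logb 2 (h : ℝ)) ≤ (L.ncard : ℝ) ∧
      ∀ v : List ℕ, Set.ncard {i : ℕ | ∃ l ∈ L, (v ++ [i]) <+: l} ≤ 2 := by
  intro m
  induction m with
  | zero =>
    intro T hcard hroot _ _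
    exact absurd (Finset.card_pos.2 ⟨[], hroot⟩) (by omega)
  | succ m ih =>
    intro T hcard hroot hpref hdeg
    obtain ⟨hc0, hc1, hpow⟩ := clogb_facts h hh
    set c := 1 / Real.logb 2 (h : ℝ) with hcdef
    by_cases hI : (idxF T).Nonempty
    · -- there are children
      have IH : ∀ i ∈ idxF T, ∃ L : Set (List ℕ),
          L ⊆ {v : List ℕ | v ∈ childF T i ∧ ∀ k : ℕ, v ++ [k] ∉ childF T i} ∧
          ((lvsF (childF T i)).card : ℝ) ^ c ≤ (L.ncard : ℝ) ∧
          ∀ v : List ℕ, Set.ncard {k : ℕ | ∃ l ∈ L, (v ++ [k]) <+: l} ≤ 2 := by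
        intro i hi
        refine ih (childF T i) ?_ (childF_root hi) (childF_pref hpref i) (childF_deg hdeg i hi)
        have := childF_card_lt hroot i
        omega
      obtain ⟨i₁, hi₁, hmax⟩ :=
        Finset.exists_max_image (idxF T) (fun i => (lvsF (childF T i)).card) hI
      obtain ⟨L₁, hL₁sub, hL₁n, hL₁b⟩ := IH i₁ hi₁
      have hL₁fin : L₁.Finite :=
        Set.Finite.subset (Finset.finite_toSet (childF T i₁)) (fun x hx => (hL₁sub hx).1)
      have hsum := lvsF_card_sum hpref hI
      have hL₁leaf : ∀ u ∈ L₁, (i₁ :: u) ∈ lvsF T :=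
        fun u hu => leaf_cons.2 (mem_lvsF.2 ⟨(hL₁sub hu).1, fun k hk => (hL₁sub hu).2 k hk⟩)
      by_cases hE : ((idxF T).erase i₁).Nonempty
      · -- at least two children
        obtain ⟨i₂, hi₂e, hmax₂⟩ :=
          Finset.exists_max_image _ (fun i => (lvsF (childF T i)).card) hE
        have hi₂ : i₂ ∈ idxF T := Finset.mem_of_mem_erase hi₂e
        have hne : i₁ ≠ i₂ := (Finset.ne_of_mem_erase hi₂e).symm
        obtain ⟨L₂, hL₂sub, hL₂n, hL₂b⟩ := IH i₂ hi₂
        have hL₂fin : L₂.Finite :=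
          Set.Finite.subset (Finset.finite_toSet (childF T i₂)) (fun x hx => (hL₂sub hx).1)
        have hL₂leaf : ∀ u ∈ L₂, (i₂ :: u) ∈ lvsF T :=
          fun u hu => leaf_cons.2 (mem_lvsF.2 ⟨(hL₂sub hu).1, fun k hk => (hL₂sub hu).2 k hk⟩)
        set n₁ := (lvsF (childF T i₁)).card with hn₁
        set n₂ := (lvsF (childF T i₂)).card with hn₂
        -- cardinal bound in ℕ
        have hcardle : (lvsF T).card ≤ n₁ + (h - 1) * n₂ := by
          rw [hsum, ← Finset.add_sum_erase _ _ hi₁]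
          have h1 : ∑ i ∈ (idxF T).erase i₁, (lvsF (childF T i)).card ≤
              ((idxF T).erase i₁).card • n₂ :=
            Finset.sum_le_card_nsmul _ _ _ (fun x hx => hmax₂ x hx)
          have h2 : ((idxF T).erase i₁).card ≤ h - 1 := by
            rw [Finset.card_erase_of_mem hi₁]
            have := idxF_card_le hroot hdeg
            omega
          have h3 : ((idxF T).erase i₁).card • n₂ ≤ (h - 1) * n₂ := by
            rw [smul_eq_mul]
            exact Nat.mul_le_mul_right _ h2
          omega
        -- the candidate set
        refine ⟨(fun u => i₁ :: u) '' L₁ ∪ (fun u => i₂ :: u) '' L₂, ?_, ?_, ?_⟩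
        · rintro l (⟨u, hu, rfl⟩ | ⟨u, hu, rfl⟩)
          · exact mem_lvsF.1 (hL₁leaf u hu)
          · exact mem_lvsF.1 (hL₂leaf u hu)
        · -- cardinality bound
          have hdisj : Disjoint ((fun u => i₁ :: u) '' L₁) ((fun u => i₂ :: u) '' L₂) := by
            rw [Set.disjoint_left]
            rintro a ⟨u, _, rfl⟩ ⟨w, _, hw⟩
            injection hw with h1 _
            exact hne h1.symm
          rw [Set.ncard_union_eq hdisj (hL₁fin.image _) (hL₂fin.image _),
            Set.ncard_image_of_injective _ List.cons_injective,
            Set.ncard_image_of_injective _ List.cons_injective]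
          have hkey : ((lvsF T).card : ℝ) ^ c ≤ (n₁ : ℝ) ^ c + (n₂ : ℝ) ^ c := by
            apply key_ineq h hh _ _ _ (by positivity) (by exact_mod_cast hmax i₂ hi₂)
              (by positivity)
            have : ((lvsF T).card : ℝ) ≤ ((n₁ + (h - 1) * n₂ : ℕ) : ℝ) := by
              exact_mod_cast hcardle
            push_cast [Nat.cast_sub (by omega : 1 ≤ h)] at this
            linarith
          push_cast
          linarith [hL₁n, hL₂n, hkey]
        · exact branch_union hne L₁ L₂ hL₁b hL₂b
      · -- exactly one child
        have hsingle : idxF T = {i₁} := by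
          apply Finset.eq_singleton_iff_unique_mem.2
          refine ⟨hi₁, fun x hx => ?_⟩
          by_contra hxne
          exact hE ⟨x, Finset.mem_erase.2 ⟨hxne, hx⟩⟩
        rw [hsingle, Finset.sum_singleton] at hsum
        refine ⟨(fun u => i₁ :: u) '' L₁, ?_, ?_, ?_⟩
        · rintro l ⟨u, hu, rfl⟩
          exact mem_lvsF.1 (hL₁leaf u hu)
        · rw [Set.ncard_image_of_injective _ List.cons_injective, hsum]
          exact hL₁n
        · exact branch_single i₁ L₁ hL₁b
    · -- no children: T = {[]}
      have hT : ∀ v ∈ T, v = [] := by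
        intro v hv
        cases v with
        | nil => rfl
        | cons j w =>
          exact absurd ⟨j, mem_idxF.2 (hpref _ hv [j] ⟨w, rfl⟩)⟩ hI
      have hlvs : lvsF T = {[]} := by
        ext v
        rw [mem_lvsF, Finset.mem_singleton]
        constructor
        · rintro ⟨hvT, _⟩
          exact hT _ hvT
        · rintro rfl
          refine ⟨hroot, fun i hi => ?_⟩
          simpa using hT _ hi
      refine ⟨{[]}, ?_, ?_, ?_⟩
      · rintro l rfl
        refine ⟨hroot, fun i hi => ?_⟩
        simpa using hT _ hi
      · rw [hlvs, Finset.card_singleton, Set.ncard_singleton]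
        norm_num
      · intro v
        have : {i : ℕ | ∃ l ∈ ({[]} : Set (List ℕ)), (v ++ [i]) <+: l} = ∅ := by
          ext i
          simp only [Set.mem_singleton_iff, Set.mem_setOf_eq, Set.mem_empty_iff_false, iff_false]
          rintro ⟨l, rfl, hpre⟩
          rw [List.prefix_nil] at hpre
          simpa using hpre
        rw [this]
        simp

/-- a rooted tree (encoded as a prefix-closed finite set of paths, the
children of `v` being the vertices `v ++ [i]`) with `n` leaves in which every vertex
has at most `h ≥ 2` children contains a binary subtree with at least
`n ^ (1 / log₂ h)` leaves.  The binary subtree is described by the set `L` of its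
leaves: at every vertex, at most two children have a leaf of `L` below them. -/
theorem stmt_5 (h : ℕ) (hh : 2 ≤ h) (T : Finset (List ℕ)) (hroot : [] ∈ T)
    (hpref : ∀ v ∈ T, ∀ u : List ℕ, u <+: v → u ∈ T)
    (hdeg : ∀ v ∈ T, Set.ncard {i : ℕ | v ++ [i] ∈ T} ≤ h)
    (n : ℕ) (hn : n = Set.ncard {v : List ℕ | v ∈ T ∧ ∀ i : ℕ, v ++ [i] ∉ T}) :
    ∃ L : Set (List ℕ),
      L ⊆ {v : List ℕ | v ∈ T ∧ ∀ i : ℕ, v ++ [i] ∉ T} ∧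
      (n : ℝ) ^ (1 / Real.logb 2 (h : ℝ)) ≤ (L.ncard : ℝ) ∧
      ∀ v : List ℕ, Set.ncard {i : ℕ | ∃ l ∈ L, (v ++ [i]) <+: l} ≤ 2 := by
  have hset : {v : List ℕ | v ∈ T ∧ ∀ i : ℕ, v ++ [i] ∉ T} = ↑(lvsF T) := by
    ext v
    simp [mem_lvsF]
  have hn' : n = (lvsF T).card := by
    rw [hn, hset, Set.ncard_coe_finset]
  obtain ⟨L, hsub, hcard, hbr⟩ := main_ind h hh T.card T le_rfl hroot hpref hdeg
  exact ⟨L, hsub, by rw [hn']; exact hcard, hbr⟩
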